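/- The contour moment φ₆ = (η_{20} − η_{02})[(η_{30} + η_{12})² − (η_{21} + η_{03})²] + 4η_{11}(η_{12} + η_{30})(η_{21} + η_{03}) is invariant under rotation: for every θ ∈ ℝ, computing the same expression from the central contour moments η'_{ij} of the rotated points R_θ(c_1),…,R_θ(c_N) yields the same value φ₆. -/

import Mathlib

/-- Arc-length weight `Δm_k = ‖c_k - c_{k-1}‖` (Euclidean distance between adjacent
contour points, indices taken modulo `N`). -/
noncomputable def dm (N : ℕ) [NeZero N] (c : ZMod N → ℝ × ℝ) (k : ZMod N) : ℝ :=
  Real.sqrt (((c k).1 - (c (k - 1)).1) ^ 2 + ((c k).2 - (c (k - 1)).2) ^ 2)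

/-- Ordinary contour moment `h_{ij} = Σ_k u_k^i v_k^j Δm_k`. -/
noncomputable def hmom (N : ℕ) [NeZero N] (c : ZMod N → ℝ × ℝ) (i j : ℕ) : ℝ :=
  ∑ k : ZMod N, (c k).1 ^ i * (c k).2 ^ j * dm N c k

/-- Central contour moment
`η_{ij} = Σ_k (u_k - ū)^i (v_k - v̄)^j Δm_k`, with centroid
`ū = h_{10}/h_{00}`, `v̄ = h_{01}/h_{00}`. -/
noncomputable def eta (N : ℕ) [NeZero N] (c : ZMod N → ℝ × ℝ) (i j : ℕ) : ℝ :=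
  ∑ k : ZMod N,
    ((c k).1 - hmom N c 1 0 / hmom N c 0 0) ^ i *
      ((c k).2 - hmom N c 0 1 / hmom N c 0 0) ^ j * dm N c k

/-- Rotation of the plane by angle `θ` about the origin. -/
noncomputable def rot (θ : ℝ) (p : ℝ × ℝ) : ℝ × ℝ :=
  (p.1 * Real.cos θ - p.2 * Real.sin θ, p.1 * Real.sin θ + p.2 * Real.cos θ)

lemma dm_rot (N : ℕ) [NeZero N] (c : ZMod N → ℝ × ℝ) (θ : ℝ) (k : ZMod N) :
    dm N (fun k => rot θ (c k)) k = dm N c k := by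
  unfold dm rot
  congr 1
  linear_combination (((c k).1 - (c (k-1)).1)^2 + ((c k).2 - (c (k-1)).2)^2) *
    Real.sin_sq_add_cos_sq θ

lemma hmom00_rot (N : ℕ) [NeZero N] (c : ZMod N → ℝ × ℝ) (θ : ℝ) :
    hmom N (fun k => rot θ (c k)) 0 0 = hmom N c 0 0 := by
  unfold hmom
  exact Finset.sum_congr rfl fun k _ => by rw [dm_rot]; simp

lemma hmom10_rot (N : ℕ) [NeZero N] (c : ZMod N → ℝ × ℝ) (θ : ℝ) :
    hmom N (fun k => rot θ (c k)) 1 0 =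
      Real.cos θ * hmom N c 1 0 - Real.sin θ * hmom N c 0 1 := by
  unfold hmom
  rw [Finset.mul_sum, Finset.mul_sum, ← Finset.sum_sub_distrib]
  refine Finset.sum_congr rfl fun k _ => ?_
  rw [dm_rot]
  simp only [rot]
  ring

lemma hmom01_rot (N : ℕ) [NeZero N] (c : ZMod N → ℝ × ℝ) (θ : ℝ) :
    hmom N (fun k => rot θ (c k)) 0 1 =
      Real.sin θ * hmom N c 1 0 + Real.cos θ * hmom N c 0 1 := by
  unfold hmom
  rw [Finset.mul_sum, Finset.mul_sum, ← Finset.sum_add_distrib]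
  refine Finset.sum_congr rfl fun k _ => ?_
  rw [dm_rot]
  simp only [rot]
  ring

lemma eta_rot (N : ℕ) [NeZero N] (c : ZMod N → ℝ × ℝ) (h00 : hmom N c 0 0 ≠ 0)
    (θ : ℝ) (i j : ℕ) :
    eta N (fun k => rot θ (c k)) i j =
      ∑ k : ZMod N,
        (Real.cos θ * ((c k).1 - hmom N c 1 0 / hmom N c 0 0)
          - Real.sin θ * ((c k).2 - hmom N c 0 1 / hmom N c 0 0)) ^ i *
        (Real.sin θ * ((c k).1 - hmom N c 1 0 / hmom N c 0 0)
          + Real.cos θ * ((c k).2 - hmom N c 0 1 / hmom N c 0 0)) ^ j * dm N c k := by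
  unfold eta
  refine Finset.sum_congr rfl fun k _ => ?_
  rw [dm_rot, hmom00_rot, hmom10_rot, hmom01_rot]
  have h1 : (rot θ (c k)).1 - (Real.cos θ * hmom N c 1 0 - Real.sin θ * hmom N c 0 1)
      / hmom N c 0 0 =
      Real.cos θ * ((c k).1 - hmom N c 1 0 / hmom N c 0 0)
        - Real.sin θ * ((c k).2 - hmom N c 0 1 / hmom N c 0 0) := by
    simp only [rot]; field_simp; ring
  have h2 : (rot θ (c k)).2 - (Real.sin θ * hmom N c 1 0 + Real.cos θ * hmom N c 0 1)
      / hmom N c 0 0 =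
      Real.sin θ * ((c k).1 - hmom N c 1 0 / hmom N c 0 0)
        + Real.cos θ * ((c k).2 - hmom N c 0 1 / hmom N c 0 0) := by
    simp only [rot]; field_simp; ring
  rw [h1, h2]

/-- Rotation invariance of the contour moment `φ₆`. -/
theorem phi6_rotation_invariant (N : ℕ) [NeZero N] (c : ZMod N → ℝ × ℝ)
    (h00 : hmom N c 0 0 ≠ 0) (θ : ℝ) :
    (eta N (fun k => rot θ (c k)) 2 0 - eta N (fun k => rot θ (c k)) 0 2)
        * ((eta N (fun k => rot θ (c k)) 3 0 + eta N (fun k => rot θ (c k)) 1 2) ^ 2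
            - (eta N (fun k => rot θ (c k)) 2 1 + eta N (fun k => rot θ (c k)) 0 3) ^ 2)
      + 4 * eta N (fun k => rot θ (c k)) 1 1
        * (eta N (fun k => rot θ (c k)) 1 2 + eta N (fun k => rot θ (c k)) 3 0)
        * (eta N (fun k => rot θ (c k)) 2 1 + eta N (fun k => rot θ (c k)) 0 3)
    = (eta N c 2 0 - eta N c 0 2)
        * ((eta N c 3 0 + eta N c 1 2) ^ 2 - (eta N c 2 1 + eta N c 0 3) ^ 2)
      + 4 * eta N c 1 1 * (eta N c 1 2 + eta N c 3 0) * (eta N c 2 1 + eta N c 0 3) := by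
  set C := Real.cos θ with hC
  set S := Real.sin θ with hS
  set A : ZMod N → ℝ := fun k => (c k).1 - hmom N c 1 0 / hmom N c 0 0 with hA
  set B : ZMod N → ℝ := fun k => (c k).2 - hmom N c 0 1 / hmom N c 0 0 with hB
  have hmeta : ∀ i j : ℕ, eta N c i j = ∑ k : ZMod N, A k ^ i * B k ^ j * dm N c k := by
    intro i j; rfl
  have e20 : eta N (fun k => rot θ (c k)) 2 0 =
      C^2 * eta N c 2 0 - (2*C*S) * eta N c 1 1 + S^2 * eta N c 0 2 := by
    rw [eta_rot N c h00 θ, hmeta, hmeta, hmeta, Finset.mul_sum, Finset.mul_sum, Finset.mul_sum,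
      ← Finset.sum_sub_distrib, ← Finset.sum_add_distrib]
    exact Finset.sum_congr rfl fun k _ => by ring
  have e02 : eta N (fun k => rot θ (c k)) 0 2 =
      S^2 * eta N c 2 0 + (2*C*S) * eta N c 1 1 + C^2 * eta N c 0 2 := by
    rw [eta_rot N c h00 θ, hmeta, hmeta, hmeta, Finset.mul_sum, Finset.mul_sum, Finset.mul_sum,
      ← Finset.sum_add_distrib, ← Finset.sum_add_distrib]
    exact Finset.sum_congr rfl fun k _ => by ring
  have e11 : eta N (fun k => rot θ (c k)) 1 1 =
      (C*S) * eta N c 2 0 + (C^2 - S^2) * eta N c 1 1 - (C*S) * eta N c 0 2 := by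
    rw [eta_rot N c h00 θ, hmeta, hmeta, hmeta, Finset.mul_sum, Finset.mul_sum, Finset.mul_sum,
      ← Finset.sum_add_distrib, ← Finset.sum_sub_distrib]
    exact Finset.sum_congr rfl fun k _ => by ring
  have e30 : eta N (fun k => rot θ (c k)) 3 0 =
      C^3 * eta N c 3 0 - (3*C^2*S) * eta N c 2 1 + (3*C*S^2) * eta N c 1 2
        - S^3 * eta N c 0 3 := by
    rw [eta_rot N c h00 θ, hmeta, hmeta, hmeta, hmeta, Finset.mul_sum, Finset.mul_sum,
      Finset.mul_sum, Finset.mul_sum,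
      ← Finset.sum_sub_distrib, ← Finset.sum_add_distrib, ← Finset.sum_sub_distrib]
    exact Finset.sum_congr rfl fun k _ => by ring
  have e21 : eta N (fun k => rot θ (c k)) 2 1 =
      (C^2*S) * eta N c 3 0 + (C^3 - 2*C*S^2) * eta N c 2 1
        + (S^3 - 2*C^2*S) * eta N c 1 2 + (C*S^2) * eta N c 0 3 := by
    rw [eta_rot N c h00 θ, hmeta, hmeta, hmeta, hmeta, Finset.mul_sum, Finset.mul_sum,
      Finset.mul_sum, Finset.mul_sum,
      ← Finset.sum_add_distrib, ← Finset.sum_add_distrib, ← Finset.sum_add_distrib]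
    exact Finset.sum_congr rfl fun k _ => by ring
  have e12 : eta N (fun k => rot θ (c k)) 1 2 =
      (C*S^2) * eta N c 3 0 + (2*C^2*S - S^3) * eta N c 2 1
        + (C^3 - 2*C*S^2) * eta N c 1 2 - (C^2*S) * eta N c 0 3 := by
    rw [eta_rot N c h00 θ, hmeta, hmeta, hmeta, hmeta, Finset.mul_sum, Finset.mul_sum,
      Finset.mul_sum, Finset.mul_sum,
      ← Finset.sum_add_distrib, ← Finset.sum_add_distrib, ← Finset.sum_sub_distrib]
    exact Finset.sum_congr rfl fun k _ => by ring
  have e03 : eta N (fun k => rot θ (c k)) 0 3 =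
      S^3 * eta N c 3 0 + (3*C*S^2) * eta N c 2 1 + (3*C^2*S) * eta N c 1 2
        + C^3 * eta N c 0 3 := by
    rw [eta_rot N c h00 θ, hmeta, hmeta, hmeta, hmeta, Finset.mul_sum, Finset.mul_sum,
      Finset.mul_sum, Finset.mul_sum,
      ← Finset.sum_add_distrib, ← Finset.sum_add_distrib, ← Finset.sum_add_distrib]
    exact Finset.sum_congr rfl fun k _ => by ring
  rw [e20, e02, e11, e30, e21, e12, e03]
  have pyth : S^2 + C^2 = 1 := Real.sin_sq_add_cos_sq θ
  linear_combination
    (((eta N c 2 0 - eta N c 0 2)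
        * ((eta N c 3 0 + eta N c 1 2) ^ 2 - (eta N c 2 1 + eta N c 0 3) ^ 2)
      + 4 * eta N c 1 1 * (eta N c 1 2 + eta N c 3 0) * (eta N c 2 1 + eta N c 0 3))
      * (1 + C^2 + S^2) * (1 + (C^2 + S^2)^2)) * pyth
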